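/- For every A ⊆ ℕ₀, the lower discrete Hausdorff dimension is at most the lower mass dimension, and the upper discrete Hausdorff dimension is at most the upper mass dimension: dim_H-lower(A) ≤ dim_M-lower(A) and dim_H-upper(A) ≤ dim_M-upper(A). -/

import Mathlib

open Filter

/-- The discrete Hausdorff content at scale `ρ` and dimension `γ`. -/
noncomputable def discreteHausdorffContent {α : Type*} [PseudoMetricSpace α] (ρ γ : ℝ)
    (X : Set α) : ENNReal :=
  ⨅ (s : Set (α × ℝ)) (_ : s.Countable) (_ : ∀ p ∈ s, ρ ≤ p.2)
    (_ : X ⊆ ⋃ p ∈ s, Metric.ball p.1 (p.2 / 2)),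
    ∑' p : s, ENNReal.ofReal ((p : α × ℝ).2 ^ γ)

/-- The lower mass dimension of `A ⊆ ℕ₀`. -/
noncomputable def lowerMassDim (A : Set ℕ) : ℝ :=
  liminf (fun N : ℕ => Real.log (({n ∈ A | n < N}).ncard : ℝ) / Real.log N) atTop

/-- The upper mass dimension of `A ⊆ ℕ₀`. -/
noncomputable def upperMassDim (A : Set ℕ) : ℝ :=
  limsup (fun N : ℕ => Real.log (({n ∈ A | n < N}).ncard : ℝ) / Real.log N) atTop

/-- The lower discrete Hausdorff dimension of `A ⊆ ℕ₀`:
`sup{γ ≥ 0 : liminf_N H^γ_{≥1}(A ∩ [0,N)) / N^γ > 0}`. -/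
noncomputable def lowerHausDim (A : Set ℕ) : ℝ :=
  sSup {γ : ℝ | 0 ≤ γ ∧ 0 < liminf (fun N : ℕ =>
    discreteHausdorffContent 1 γ ((fun n : ℕ => (n : ℝ)) '' {m ∈ A | m < N}) /
      ENNReal.ofReal ((N : ℝ) ^ γ)) atTop}

/-- The upper discrete Hausdorff dimension of `A ⊆ ℕ₀`. -/
noncomputable def upperHausDim (A : Set ℕ) : ℝ :=
  sSup {γ : ℝ | 0 ≤ γ ∧ 0 < limsup (fun N : ℕ =>
    discreteHausdorffContent 1 γ ((fun n : ℕ => (n : ℝ)) '' {m ∈ A | m < N}) /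
      ENNReal.ofReal ((N : ℝ) ^ γ)) atTop}

lemma content_le (γ : ℝ) (S : Set ℕ) (hS : S.Finite) :
    discreteHausdorffContent 1 γ ((fun n : ℕ => (n : ℝ)) '' S) ≤ (S.ncard : ENNReal) := by
  set s : Set (ℝ × ℝ) := (fun m : ℕ => ((m : ℝ), (1 : ℝ))) '' S with hs
  have hsf : s.Finite := hS.image _
  have hinj : Function.Injective (fun m : ℕ => ((m : ℝ), (1 : ℝ))) := by
    intro a b h
    simpa using congrArg Prod.fst h
  refine le_trans (iInf_le_of_le s (iInf_le_of_le hsf.countable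
    (iInf_le_of_le ?_ (iInf_le_of_le ?_ le_rfl)))) ?_
  · rintro p ⟨m, hm, rfl⟩; simp
  · rintro x ⟨m, hm, rfl⟩
    refine Set.mem_biUnion (Set.mem_image_of_mem _ hm) ?_
    simp [Metric.mem_ball]
  · have : ∀ p : s, ENNReal.ofReal ((p : ℝ × ℝ).2 ^ γ) = 1 := by
      rintro ⟨p, m, hm, rfl⟩
      simp [Real.one_rpow]
    rw [tsum_congr this]
    haveI := hsf.fintype
    rw [tsum_eq_sum (s := Finset.univ) (by simp)]
    simp only [Finset.sum_const, nsmul_eq_mul, mul_one]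
    rw [← Set.ncard_image_of_injective S hinj]
    rw [Set.ncard_eq_toFinset_card']
    simp [Set.toFinset_card]
    exact le_of_eq (by rw [hs])

lemma pointwise_bound (A : Set ℕ) (γ : ℝ) (c : ENNReal) (hc0 : c ≠ 0) (hc1 : c ≤ 1)
    (N : ℕ) (hN : 2 ≤ N)
    (hcb : c ≤ discreteHausdorffContent 1 γ ((fun n : ℕ => (n : ℝ)) '' {m ∈ A | m < N}) /
      ENNReal.ofReal ((N : ℝ) ^ γ)) :
    γ + Real.log c.toReal / Real.log N ≤
      Real.log (({n ∈ A | n < N}).ncard : ℝ) / Real.log N := by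
  have hct : c ≠ ⊤ := (lt_of_le_of_lt hc1 ENNReal.one_lt_top).ne
  have hcr : 0 < c.toReal := ENNReal.toReal_pos hc0 hct
  have hNpos : (0 : ℝ) < N := by positivity
  have hN1 : (1 : ℝ) < N := by exact_mod_cast hN
  have hrp : 0 < (N : ℝ) ^ γ := Real.rpow_pos_of_pos hNpos γ
  have hne : ENNReal.ofReal ((N : ℝ) ^ γ) ≠ 0 := (ENNReal.ofReal_pos.mpr hrp).ne'
  have hmul : c * ENNReal.ofReal ((N : ℝ) ^ γ) ≤ (({n ∈ A | n < N}).ncard : ENNReal) := by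
    refine le_trans ((ENNReal.le_div_iff_mul_le (Or.inl hne) (Or.inl ENNReal.ofReal_ne_top)).mp hcb) ?_
    exact content_le γ _ ((Set.finite_Iio N).subset (fun x hx => hx.2))
  have hreal : c.toReal * (N : ℝ) ^ γ ≤ (({n ∈ A | n < N}).ncard : ℝ) := by
    have := ENNReal.toReal_mono (by simp) hmul
    rwa [ENNReal.toReal_mul, ENNReal.toReal_ofReal hrp.le, ENNReal.toReal_natCast] at this
  have hlog : Real.log c.toReal + γ * Real.log N ≤ Real.log (({n ∈ A | n < N}).ncard : ℝ) := by
    have h1 : Real.log (c.toReal * (N : ℝ) ^ γ) ≤ Real.log (({n ∈ A | n < N}).ncard : ℝ) :=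
      Real.log_le_log (mul_pos hcr hrp) hreal
    rwa [Real.log_mul hcr.ne' hrp.ne', Real.log_rpow hNpos] at h1
  have hlogN : 0 < Real.log N := Real.log_pos hN1
  have := (div_le_div_iff_of_pos_right hlogN).mpr hlog
  rwa [add_div, mul_div_assoc, div_self hlogN.ne', mul_one, add_comm] at this

lemma g_nonneg (A : Set ℕ) (N : ℕ) :
    0 ≤ Real.log (({n ∈ A | n < N}).ncard : ℝ) / Real.log N := by
  apply div_nonneg
  · rcases Nat.eq_zero_or_pos (({n ∈ A | n < N}).ncard) with h | h
    · simp [h]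
    · exact Real.log_nonneg (by exact_mod_cast h)
  · rcases Nat.eq_zero_or_pos N with h | h
    · simp [h]
    · exact Real.log_nonneg (by exact_mod_cast h)

lemma g_le_one (A : Set ℕ) (N : ℕ) :
    Real.log (({n ∈ A | n < N}).ncard : ℝ) / Real.log N ≤ 1 := by
  rcases le_or_gt N 1 with h | h
  · interval_cases N <;> simp
  · have hlogN : 0 < Real.log N := Real.log_pos (by exact_mod_cast h)
    rw [div_le_one hlogN]
    have hcard : ({n ∈ A | n < N}).ncard ≤ N := by
      have h1 : (Set.Iio N).ncard = N := by
        rw [← Finset.coe_range, Set.ncard_coe_finset, Finset.card_range]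
      exact le_trans (Set.ncard_le_ncard (fun x hx => hx.2) (Set.finite_Iio N)) h1.le
    rcases Nat.eq_zero_or_pos (({n ∈ A | n < N}).ncard) with h0 | h0
    · simp [h0, hlogN.le]
    · exact Real.log_le_log (by exact_mod_cast h0) (by exact_mod_cast hcard)

/-- For every `A ⊆ ℕ₀`, the lower (resp. upper) discrete Hausdorff dimension is at most the
lower (resp. upper) mass dimension. -/
theorem stmt15 (A : Set ℕ) :
    lowerHausDim A ≤ lowerMassDim A ∧ upperHausDim A ≤ upperMassDim A := by
  set g : ℕ → ℝ := fun N => Real.log (({n ∈ A | n < N}).ncard : ℝ) / Real.log N with hg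
  have hbdd : IsBoundedUnder (· ≤ ·) atTop g := isBoundedUnder_of ⟨1, fun N => g_le_one A N⟩
  have hcob : IsCoboundedUnder (· ≥ ·) atTop g := hbdd.isCoboundedUnder_ge
  have hml : 0 ≤ lowerMassDim A := le_liminf_of_le hcob (Eventually.of_forall (g_nonneg A))
  have hmu : 0 ≤ upperMassDim A :=
    le_limsup_of_frequently_le (Frequently.of_forall (g_nonneg A)) hbdd
  have key : ∀ γ : ℝ, ∀ ε : ℝ, 0 < ε → ∀ L : ENNReal, 0 < L →
      ∃ c : ENNReal, c ≠ 0 ∧ c ≤ 1 ∧ c < L ∧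
        (∀ᶠ N : ℕ in atTop, 2 ≤ N ∧ -ε ≤ Real.log c.toReal / Real.log N) := by
    intro γ ε hε L hL
    refine ⟨min 1 L / 2, ?_, ?_, ?_, ?_⟩
    · exact (ENNReal.half_pos (lt_min one_pos hL).ne').ne'
    · exact le_trans ENNReal.half_le_self (min_le_left _ _)
    · exact lt_of_lt_of_le
        (ENNReal.half_lt_self (lt_min one_pos hL).ne'
          (ne_top_of_le_ne_top ENNReal.one_ne_top (min_le_left _ _))) (min_le_right _ _)
    · have htend : Tendsto (fun N : ℕ => Real.log (min 1 L / 2).toReal / Real.log N) atTop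
          (nhds 0) :=
        tendsto_const_nhds.div_atTop (Real.tendsto_log_atTop.comp tendsto_natCast_atTop_atTop)
      exact (eventually_ge_atTop 2).and (htend.eventually (eventually_ge_nhds (by linarith)))
  constructor
  · refine Real.sSup_le ?_ hml
    rintro γ ⟨hγ0, hpos⟩
    refine le_of_forall_sub_le fun ε hε => ?_
    obtain ⟨c, hc0, hc1, hcL, hev⟩ := key γ ε hε _ hpos
    have heva : ∀ᶠ N : ℕ in atTop, c < discreteHausdorffContent 1 γ
        ((fun n : ℕ => (n : ℝ)) '' {m ∈ A | m < N}) / ENNReal.ofReal ((N : ℝ) ^ γ) :=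
      eventually_lt_of_lt_liminf hcL
    refine le_liminf_of_le hcob ((heva.and hev).mono ?_)
    rintro N ⟨h1, h2, h3⟩
    linarith [pointwise_bound A γ c hc0 hc1 N h2 h1.le]
  · refine Real.sSup_le ?_ hmu
    rintro γ ⟨hγ0, hpos⟩
    refine le_of_forall_sub_le fun ε hε => ?_
    obtain ⟨c, hc0, hc1, hcL, hev⟩ := key γ ε hε _ hpos
    have heva : ∃ᶠ N : ℕ in atTop, c < discreteHausdorffContent 1 γ
        ((fun n : ℕ => (n : ℝ)) '' {m ∈ A | m < N}) / ENNReal.ofReal ((N : ℝ) ^ γ) :=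
      frequently_lt_of_lt_limsup (h := hcL)
    refine le_limsup_of_frequently_le ((heva.and_eventually hev).mono ?_) hbdd
    rintro N ⟨h1, h2, h3⟩
    linarith [pointwise_bound A γ c hc0 hc1 N h2 h1.le]
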